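/- If a (K,F,Z,S) PDA exists with F−1 > Z, then a (⌈(F−Z)K/S⌉, F−⌈(F−Z)K/S⌉, Z−⌈(F−Z)K/S⌉+1, S') PDA exists with S' ≤ S−1. -/

import Mathlib

/-- A `(K, F, Z, S)` placement delivery array: an `F × K` array over `[0,S) ∪ {*}`
(star encoded as `none`) such that each column contains exactly `Z` stars, every
integer in `[0,S)` appears, and any two equal integer entries lie in distinct rows
and distinct columns with stars at the two crossing positions. -/
def IsPDA (K F Z S : ℕ) (P : Fin F → Fin K → Option ℕ) : Prop :=
  (∀ j, (Finset.univ.filter fun i => P i j = none).card = Z) ∧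
  (∀ i j s, P i j = some s → s < S) ∧
  (∀ s, s < S → ∃ i j, P i j = some s) ∧
  (∀ i₁ j₁ i₂ j₂ s, P i₁ j₁ = some s → P i₂ j₂ = some s → (i₁ ≠ i₂ ∨ j₁ ≠ j₂) →
    i₁ ≠ i₂ ∧ j₁ ≠ j₂ ∧ P i₁ j₂ = none ∧ P i₂ j₁ = none)

/-- `minS K F Z` is the minimum `S` for which a `(K, F, Z, S)` PDA exists. -/
noncomputable def minS (K F Z : ℕ) : ℕ :=
  sInf {S | ∃ P : Fin F → Fin K → Option ℕ, IsPDA K F Z S P}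

/-- Key construction: given a PDA and a set `T` of `t ≥ 1` cells all carrying the
same symbol `s₀`, the subarray on the columns of `T` and the rows away from `T` is
a `(t, F-t, Z+1-t, S')` PDA for some `S' ≤ S - 1`. -/
theorem auxPDA (K F Z S t : ℕ) (P : Fin F → Fin K → Option ℕ) (hP : IsPDA K F Z S P)
    (s₀ : ℕ) (hs₀ : s₀ < S) (T : Finset (Fin F × Fin K))
    (hT : ∀ p ∈ T, P p.1 p.2 = some s₀)
    (hTcard : T.card = t) :
    ∃ S' ≤ S - 1, ∃ Q : Fin (F - t) → Fin t → Option ℕ,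
      IsPDA t (F - t) (Z + 1 - t) S' Q := by
  classical
  obtain ⟨hstar, hlt, -, hpda⟩ := hP
  have hdist : ∀ p ∈ T, ∀ q ∈ T, p ≠ q →
      p.1 ≠ q.1 ∧ p.2 ≠ q.2 ∧ P p.1 q.2 = none ∧ P q.1 p.2 = none := by
    intro p hp q hq hpq
    refine hpda p.1 p.2 q.1 q.2 s₀ (hT p hp) (hT q hq) ?_
    by_contra hcon
    push_neg at hcon
    exact hpq (Prod.ext hcon.1 hcon.2)
  set R : Finset (Fin F) := T.image Prod.fst with hRdef
  set C : Finset (Fin K) := T.image Prod.snd with hCdef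
  have hfstinj : Set.InjOn Prod.fst (T : Set (Fin F × Fin K)) := by
    intro p hp q hq h
    by_contra hne
    exact (hdist p hp q hq hne).1 h
  have hsndinj : Set.InjOn Prod.snd (T : Set (Fin F × Fin K)) := by
    intro p hp q hq h
    by_contra hne
    exact (hdist p hp q hq hne).2.1 h
  have hR : R.card = t := by rw [hRdef, Finset.card_image_of_injOn hfstinj, hTcard]
  have hC : C.card = t := by rw [hCdef, Finset.card_image_of_injOn hsndinj, hTcard]
  have htF : t ≤ F := by
    have h1 := Finset.card_le_univ R
    rw [hR] at h1
    simpa using h1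
  have hRc : Rᶜ.card = F - t := by
    rw [Finset.card_compl, hR]
    simp
  set rEmb := Rᶜ.orderIsoOfFin hRc with hrEmb
  set cEmb := C.orderIsoOfFin hC with hcEmb
  set Q : Fin (F - t) → Fin t → Option ℕ := fun i j => P ↑(rEmb i) ↑(cEmb j) with hQdef
  have hQval : ∀ i j v, Q i j = some v → v < S ∧ v ≠ s₀ := by
    intro i j v h
    refine ⟨hlt _ _ _ h, ?_⟩
    rintro rfl
    have hcC : (↑(cEmb j) : Fin K) ∈ T.image Prod.snd := (cEmb j).2
    obtain ⟨q, hqT, hqc⟩ := Finset.mem_image.mp hcC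
    have hrR : (↑(rEmb i) : Fin F) ∉ R := Finset.mem_compl.mp (rEmb i).2
    have hq1R : q.1 ∈ R := Finset.mem_image_of_mem _ hqT
    have hne : (↑(rEmb i) : Fin F) ≠ q.1 := fun h' => hrR (h' ▸ hq1R)
    have h4 := hpda (↑(rEmb i)) (↑(cEmb j)) q.1 q.2 v h (hT q hqT) (Or.inl hne)
    exact h4.2.1 hqc.symm
  set V : Finset ℕ :=
    Finset.univ.biUnion (fun p : Fin (F - t) × Fin t => (Q p.1 p.2).toFinset) with hVdef
  have hVmem : ∀ v, v ∈ V ↔ ∃ i j, Q i j = some v := by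
    intro v
    constructor
    · intro hv
      rw [hVdef] at hv
      obtain ⟨p, -, hp⟩ := Finset.mem_biUnion.mp hv
      exact ⟨p.1, p.2, by simpa [Option.mem_toFinset, Option.mem_def] using hp⟩
    · rintro ⟨i, j, h⟩
      rw [hVdef]
      exact Finset.mem_biUnion.mpr ⟨(i, j), Finset.mem_univ _,
        by simp [Option.mem_toFinset, h]⟩
  set S' := V.card with hS'def
  set f := V.orderIsoOfFin hS'def.symm with hfdef
  set relabel : ℕ → Option ℕ :=
    fun v => if h : v ∈ V then some ((f.symm ⟨v, h⟩ : Fin S') : ℕ) else none with hreldef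
  have hrel_some : ∀ v (h : v ∈ V), relabel v = some ((f.symm ⟨v, h⟩ : Fin S') : ℕ) := by
    intro v h
    rw [hreldef]
    simp [h]
  have hrel_inj : ∀ v₁ v₂ w, relabel v₁ = some w → relabel v₂ = some w → v₁ = v₂ := by
    intro v₁ v₂ w h1 h2
    rw [hreldef] at h1 h2
    by_cases hv1 : v₁ ∈ V
    · by_cases hv2 : v₂ ∈ V
      · simp only [dif_pos hv1] at h1
        simp only [dif_pos hv2] at h2
        have e1 := Option.some.inj h1
        have e2 := Option.some.inj h2
        have heq : (f.symm ⟨v₁, hv1⟩ : Fin S') = f.symm ⟨v₂, hv2⟩ :=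
          Fin.val_injective (e1.trans e2.symm)
        have h3 := congrArg f heq
        simp only [OrderIso.apply_symm_apply] at h3
        exact congrArg Subtype.val h3
      · simp only [dif_neg hv2] at h2
        simp at h2
    · simp only [dif_neg hv1] at h1
      simp at h1
  have hQV : ∀ i j v, Q i j = some v → v ∈ V := fun i j v h => (hVmem v).mpr ⟨i, j, h⟩
  set Q' : Fin (F - t) → Fin t → Option ℕ := fun i j => (Q i j).bind relabel with hQ'def
  have hQ'none : ∀ i j, Q' i j = none ↔ Q i j = none := by
    intro i j
    cases hq : Q i j with
    | none => simp [hQ'def, hq]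
    | some v => simp [hQ'def, hq, hrel_some v (hQV i j v hq)]
  have hS'le : S' ≤ S - 1 := by
    have hsub : V ⊆ (Finset.range S).erase s₀ := by
      intro v hv
      obtain ⟨i, j, h⟩ := (hVmem v).mp hv
      have hvv := hQval i j v h
      rw [Finset.mem_erase, Finset.mem_range]
      exact ⟨hvv.2, hvv.1⟩
    have h1 := Finset.card_le_card hsub
    rw [Finset.card_erase_of_mem (Finset.mem_range.mpr hs₀), Finset.card_range] at h1
    rw [hS'def]
    exact h1
  refine ⟨S', hS'le, Q', ?_, ?_, ?_, ?_⟩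
  · -- star count per column
    intro j
    have ht1 : 0 < t := j.pos
    have hcC : (↑(cEmb j) : Fin K) ∈ T.image Prod.snd := (cEmb j).2
    obtain ⟨p, hpT, hpc⟩ := Finset.mem_image.mp hcC
    have hA2 : P p.1 ↑(cEmb j) = some s₀ := by rw [← hpc]; exact hT p hpT
    have hA1 : ∀ q ∈ T, q ≠ p → P q.1 ↑(cEmb j) = none := by
      intro q hq hqp
      have h5 := (hdist q hq p hpT hqp).2.2.1
      rwa [hpc] at h5
    have hfilR : R.filter (fun i => P i ↑(cEmb j) = none) = R.erase p.1 := by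
      ext i
      simp only [Finset.mem_filter, Finset.mem_erase]
      constructor
      · rintro ⟨hiR, hin⟩
        refine ⟨?_, hiR⟩
        rintro rfl
        rw [hA2] at hin
        simp at hin
      · rintro ⟨hip, hiR⟩
        refine ⟨hiR, ?_⟩
        have hiR' : i ∈ T.image Prod.fst := hiR
        obtain ⟨q, hqT, hqi⟩ := Finset.mem_image.mp hiR'
        have hqp : q ≠ p := by rintro rfl; exact hip hqi.symm
        rw [← hqi]
        exact hA1 q hqT hqp
    have hp1R : p.1 ∈ R := Finset.mem_image_of_mem _ hpT
    have hcard1 : (R.filter fun i => P i ↑(cEmb j) = none).card = t - 1 := by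
      rw [hfilR, Finset.card_erase_of_mem hp1R, hR]
    have hsplit : (R.filter fun i => P i ↑(cEmb j) = none).card
        + (Rᶜ.filter fun i => P i ↑(cEmb j) = none).card = Z := by
      rw [← hstar ↑(cEmb j), ← Finset.card_union_of_disjoint
        (Finset.disjoint_filter_filter disjoint_compl_right), ← Finset.filter_union,
        Finset.union_compl]
    have himg : ((Finset.univ.filter fun i : Fin (F - t) => Q' i j = none).image
        fun i => (↑(rEmb i) : Fin F)) = Rᶜ.filter fun i => P i ↑(cEmb j) = none := by
      ext r
      simp only [Finset.mem_image, Finset.mem_filter, Finset.mem_univ, true_and]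
      constructor
      · rintro ⟨i, hi, rfl⟩
        refine ⟨(rEmb i).2, ?_⟩
        have h6 := (hQ'none i j).mp hi
        simpa [hQdef] using h6
      · rintro ⟨hrRc, hnone⟩
        refine ⟨rEmb.symm ⟨r, hrRc⟩, ?_, ?_⟩
        · rw [hQ'none]
          simp only [hQdef]
          rw [OrderIso.apply_symm_apply]
          exact hnone
        · rw [OrderIso.apply_symm_apply]
    have hinj2 : Function.Injective fun i : Fin (F - t) => (↑(rEmb i) : Fin F) :=
      fun a b h => rEmb.injective (Subtype.ext h)
    have hcard2 : (Finset.univ.filter fun i : Fin (F - t) => Q' i j = none).card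
        = (Rᶜ.filter fun i => P i ↑(cEmb j) = none).card := by
      rw [← himg, Finset.card_image_of_injective _ hinj2]
    rw [hcard1] at hsplit
    rw [hcard2]
    omega
  · -- values bounded by S'
    intro i j w h
    simp only [hQ'def] at h
    cases hq : Q i j with
    | none => rw [hq] at h; simp at h
    | some v =>
      rw [hq, Option.bind_some] at h
      rw [hrel_some v (hQV i j v hq)] at h
      have h7 := Option.some.inj h
      rw [← h7]
      exact (f.symm _).isLt
  · -- every symbol below S' appears
    intro w hw
    have hvV : ((f ⟨w, hw⟩ : {y // y ∈ V}) : ℕ) ∈ V := (f ⟨w, hw⟩).2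
    obtain ⟨i, j, hq⟩ := (hVmem _).mp hvV
    refine ⟨i, j, ?_⟩
    simp only [hQ'def]
    rw [hq, Option.bind_some, hrel_some _ hvV]
    congr 1
    have h8 : (⟨((f ⟨w, hw⟩ : {y // y ∈ V}) : ℕ), hvV⟩ : {y // y ∈ V}) = f ⟨w, hw⟩ :=
      Subtype.ext rfl
    rw [h8, OrderIso.symm_apply_apply]
  · -- the PDA exchange property
    intro i₁ j₁ i₂ j₂ w h1 h2 hne
    simp only [hQ'def] at h1 h2
    have ext1 : ∃ v, Q i₁ j₁ = some v ∧ relabel v = some w := by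
      cases hq : Q i₁ j₁ with
      | none => rw [hq] at h1; simp at h1
      | some v => rw [hq, Option.bind_some] at h1; exact ⟨v, rfl, h1⟩
    have ext2 : ∃ v, Q i₂ j₂ = some v ∧ relabel v = some w := by
      cases hq : Q i₂ j₂ with
      | none => rw [hq] at h2; simp at h2
      | some v => rw [hq, Option.bind_some] at h2; exact ⟨v, rfl, h2⟩
    obtain ⟨v₁, hq1, hr1⟩ := ext1
    obtain ⟨v₂, hq2, hr2⟩ := ext2
    have hv12 : v₁ = v₂ := hrel_inj _ _ _ hr1 hr2
    subst hv12
    have hQ1 : P ↑(rEmb i₁) ↑(cEmb j₁) = some v₁ := by simpa [hQdef] using hq1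
    have hQ2 : P ↑(rEmb i₂) ↑(cEmb j₂) = some v₁ := by simpa [hQdef] using hq2
    have hor : (↑(rEmb i₁) : Fin F) ≠ ↑(rEmb i₂) ∨ (↑(cEmb j₁) : Fin K) ≠ ↑(cEmb j₂) := by
      rcases hne with h | h
      · exact Or.inl fun he => h (rEmb.injective (Subtype.ext he))
      · exact Or.inr fun he => h (cEmb.injective (Subtype.ext he))
    obtain ⟨ha, hb, hc, hd⟩ := hpda _ _ _ _ v₁ hQ1 hQ2 hor
    refine ⟨fun he => ha (by rw [he]), fun he => hb (by rw [he]), ?_, ?_⟩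
    · simp only [hQ'def, hQdef]
      rw [hc]
      rfl
    · simp only [hQ'def, hQdef]
      rw [hd]
      rfl

/-- if a (K,F,Z,S) PDA exists with F−1 > Z, then, with
t = ⌈(F−Z)K/S⌉, a (t, F−t, Z−t+1, S') PDA exists for some S' ≤ S−1. -/
theorem stmt7 (K F Z S : ℕ) (hZF : Z + 1 < F)
    (P : Fin F → Fin K → Option ℕ) (hP : IsPDA K F Z S P) :
    ∃ S' ≤ S - 1,
      ∃ Q : Fin (F - (F - Z) * K ⌈/⌉ S) → Fin ((F - Z) * K ⌈/⌉ S) → Option ℕ,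
        IsPDA ((F - Z) * K ⌈/⌉ S) (F - (F - Z) * K ⌈/⌉ S)
          (Z + 1 - (F - Z) * K ⌈/⌉ S) S' Q := by
  classical
  set t := (F - Z) * K ⌈/⌉ S with ht
  rcases Nat.eq_zero_or_pos t with ht0 | ht1
  · refine ⟨0, Nat.zero_le _, fun _ _ => none, ?_, ?_, ?_, ?_⟩
    · intro j; exact absurd j.isLt (by omega)
    · intro i j s h; exact absurd j.isLt (by omega)
    · intro s hs; exact absurd hs (by omega)
    · intro i₁ j₁ i₂ j₂ s h1 h2 h3; exact absurd j₁.isLt (by omega)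
  have hstar := hP.1
  have hlt := hP.2.1
  have hnonstar : ∀ j, (Finset.univ.filter fun i : Fin F => ¬ P i j = none).card = F - Z := by
    intro j
    have h1 := hstar j
    have h2 := Finset.card_filter_add_card_filter_not
      (s := (Finset.univ : Finset (Fin F))) (p := fun i => P i j = none)
    simp only [Finset.card_univ, Fintype.card_fin] at h2
    omega
  have hA : (Finset.univ.filter fun p : Fin F × Fin K => ¬ P p.1 p.2 = none).card
      = (F - Z) * K := by
    rw [Finset.card_eq_sum_card_fiberwise
      (f := Prod.snd) (t := (Finset.univ : Finset (Fin K))) (fun x _ => Finset.mem_univ _)]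
    have hfib : ∀ jj : Fin K,
        ((Finset.univ.filter fun p : Fin F × Fin K => ¬ P p.1 p.2 = none).filter
          fun p => p.2 = jj).card = F - Z := by
      intro jj
      have himg : ((Finset.univ.filter fun i : Fin F => ¬ P i jj = none).image
          fun i => ((i, jj) : Fin F × Fin K))
          = (Finset.univ.filter fun p : Fin F × Fin K => ¬ P p.1 p.2 = none).filter
            fun p => p.2 = jj := by
        ext p
        simp only [Finset.mem_image, Finset.mem_filter, Finset.mem_univ, true_and]
        constructor
        · rintro ⟨i, hi, rfl⟩
          exact ⟨hi, rfl⟩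
        · rintro ⟨h1, h2⟩
          refine ⟨p.1, ?_, ?_⟩
          · rw [← h2] at *; exact h1
          · exact Prod.ext rfl h2.symm
      rw [← himg, Finset.card_image_of_injective _
        (fun a b h => congrArg Prod.fst h), hnonstar jj]
    rw [Finset.sum_congr rfl (fun jj _ => hfib jj)]
    simp [Finset.sum_const, Finset.card_univ, Nat.mul_comm]
  set occ : ℕ → Finset (Fin F × Fin K) :=
    fun s => Finset.univ.filter fun p => P p.1 p.2 = some s with hoccdef
  have hsum : ∑ s ∈ Finset.range S, (occ s).card = (F - Z) * K := by
    have hmem : ∀ p ∈ (Finset.univ.filter fun p : Fin F × Fin K => ¬ P p.1 p.2 = none),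
        (P p.1 p.2).getD 0 ∈ Finset.range S := by
      intro p hp
      rw [Finset.mem_filter] at hp
      cases hq : P p.1 p.2 with
      | none => exact absurd hq hp.2
      | some v => simpa using hlt _ _ _ hq
    rw [← hA, Finset.card_eq_sum_card_fiberwise hmem]
    refine Finset.sum_congr rfl ?_
    intro s hs
    congr 1
    ext p
    simp only [hoccdef, Finset.mem_filter, Finset.mem_univ, true_and]
    constructor
    · intro h
      simp [h]
    · rintro ⟨h1, h2⟩
      cases hq : P p.1 p.2 with
      | none => exact absurd hq h1
      | some v =>
        simp only [hq, Option.getD_some] at h2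
        simp_all
  have hS : 0 < S := by
    by_contra h
    have hS0 : S = 0 := by omega
    have h1' := ht1
    rw [ht, hS0, Nat.ceilDiv_eq_add_pred_div] at h1'
    simp at h1'
  have htot : 0 < (F - Z) * K := by
    by_contra h0
    have h00 : (F - Z) * K = 0 := by omega
    have h1' := ht1
    rw [ht, h00, Nat.ceilDiv_eq_add_pred_div, Nat.div_eq_of_lt (by omega)] at h1'
    omega
  have hpig : ∃ s < S, t ≤ (occ s).card := by
    by_contra hc
    push_neg at hc
    obtain ⟨u, hu⟩ : ∃ u, t = u + 1 := ⟨t - 1, by omega⟩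
    have hb : ∑ s ∈ Finset.range S, (occ s).card ≤ S * u := by
      calc ∑ s ∈ Finset.range S, (occ s).card
          ≤ (Finset.range S).card • u := Finset.sum_le_card_nsmul _ _ _ (fun s hs => by
            have := hc s (Finset.mem_range.mp hs); omega)
        _ = S * u := by rw [Finset.card_range, smul_eq_mul]
    have hts : t * S ≤ (F - Z) * K + S - 1 := by
      have h9 := Nat.div_mul_le_self ((F - Z) * K + S - 1) S
      rw [ht, Nat.ceilDiv_eq_add_pred_div]
      exact h9
    rw [hu, add_one_mul] at hts
    have h10 : u * S = S * u := Nat.mul_comm u S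
    rw [hsum] at hb
    omega
  obtain ⟨s₀, hs₀S, hs₀t⟩ := hpig
  obtain ⟨T, hTsub, hTcard⟩ := Finset.exists_subset_card_eq hs₀t
  have hTval : ∀ p ∈ T, P p.1 p.2 = some s₀ := by
    intro p hp
    have h : p ∈ Finset.univ.filter fun p : Fin F × Fin K => P p.1 p.2 = some s₀ :=
      hTsub hp
    exact (Finset.mem_filter.mp h).2
  exact auxPDA K F Z S t P hP s₀ hs₀S T hTval hTcard
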